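/- arXiv:2302.05782 — 3 statements merged into one kernel-verified Lean document; each statement's English description precedes it below -/
import Mathlib

section
/- Let C and D be triangulated categories, each equipped with a homologically finite t-structure (every object has only finitely many nonzero cohomology objects with respect to the t-structure), with hearts C♥ and D♥, and each equipped with a t-exact duality functor, D_C on C and D_D on D. Let φ : C → D be an exact (triangulated) fully faithful functor such that φ ∘ D_C ≅ D_D ∘ φ. Assume that every object of C♥ and every object of D♥ has finite length, and that every simple object L of D♥ satisfies D_D(L) ≅ L. Then φ is t-exact, and φ sends every simple object of C♥ to a simple object of D♥. -/
open CategoryTheory Limits Triangulated CategoryTheory.Pretriangulated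
open CategoryTheory.Pretriangulated.Opposite

/-- An object of an abelian category has finite length if it admits a finite filtration
`0 = X₀ ⊆ X₁ ⊆ ⋯ ⊆ Xₙ = X` whose successive quotients are simple; equivalently,
it is zero or an extension of a simple object by a finite length object. -/
inductive CategoryTheory.IsFiniteLength {A : Type*} [Category A] [Abelian A] : A → Prop
  | of_isZero (X : A) : IsZero X → CategoryTheory.IsFiniteLength X
  | of_shortExact (S : ShortComplex A) (hS : S.ShortExact)
      (h₁ : CategoryTheory.IsFiniteLength S.X₁) (h₃ : Simple S.X₃) :
      CategoryTheory.IsFiniteLength S.X₂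

section FunctorZero

variable {A : Type*} {B : Type*} [Category A] [Category B]
  [HasZeroMorphisms A] [HasZeroMorphisms B] [HasZeroObject A]
  (F : A ⥤ B) [F.Full] [F.Faithful]

lemma auxF_isZero_obj {Z : A} (hZ : IsZero Z) : IsZero (F.obj Z) := by
  rw [IsZero.iff_id_eq_zero]
  have h1 : 𝟙 (F.obj Z) = F.map (𝟙 Z) := (F.map_id Z).symm
  have h2 : F.map (F.preimage (0 : F.obj Z ⟶ F.obj Z)) = 0 := F.map_preimage _
  rw [h1, hZ.eq_of_src (𝟙 Z) (F.preimage 0), h2]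

lemma auxF_map_zero {X Y : A} : F.map (0 : X ⟶ Y) = 0 := by
  obtain ⟨Z, hZ⟩ := HasZeroObject.zero (C := A)
  have : (0 : X ⟶ Y) = (0 : X ⟶ Z) ≫ (0 : Z ⟶ Y) := by simp
  rw [this, F.map_comp]
  have : F.map (0 : Z ⟶ Y) = 0 := (auxF_isZero_obj F hZ).eq_of_src _ _
  rw [this, comp_zero]

lemma auxF_map_eq_zero_iff {X Y : A} (f : X ⟶ Y) : F.map f = 0 ↔ f = 0 := by
  constructor
  · intro h
    apply F.map_injective
    rw [h, auxF_map_zero]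
  · rintro rfl
    exact auxF_map_zero F

lemma auxF_isZero_iff (X : A) : IsZero (F.obj X) ↔ IsZero X := by
  rw [IsZero.iff_id_eq_zero, IsZero.iff_id_eq_zero, ← F.map_id,
    auxF_map_eq_zero_iff]

end FunctorZero

section TS

variable {C : Type*} [Category C] [HasZeroObject C] [Preadditive C] [HasShift C ℤ]
  [∀ n : ℤ, (CategoryTheory.shiftFunctor C n).Additive] [Pretriangulated C]
  (t : TStructure C)

lemma aux_homzero {a b : ℤ} (hab : a < b) {X Y : C} (hX : t.le a X) (hY : t.ge b Y)
    (f : X ⟶ Y) : f = 0 := by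
  have hX' : t.le 0 (X⟦a⟧) := t.le_shift a a 0 (by omega) X hX
  have hY' : t.ge (b - a) (Y⟦a⟧) := t.ge_shift b a (b - a) (by omega) Y hY
  have hY'' : t.ge 1 (Y⟦a⟧) := t.ge_antitone (by omega) _ hY'
  have : (shiftFunctor C a).map f = 0 := t.zero' _ hX' hY''
  apply (shiftFunctor C a).map_injective
  simpa using this

lemma aux_cancel_post {T : Triangle C} (hT : T ∈ distTriang C) {W : C}
    (u : W ⟶ T.obj₁) (hu : u ≫ T.mor₁ = 0)
    (hzero : ∀ h : W ⟶ (T.obj₃)⟦(-1 : ℤ)⟧, h = 0) : u = 0 := by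
  obtain ⟨g, hg⟩ := Triangle.coyoneda_exact₂ _ (inv_rot_of_distTriang _ hT) u (by exact hu)
  rw [hg, (show g = 0 from hzero g), zero_comp]; rfl

lemma aux_cancel_pre {T : Triangle C} (hT : T ∈ distTriang C) {W : C}
    (u : T.obj₃ ⟶ W) (hu : T.mor₂ ≫ u = 0)
    (hzero : ∀ h : (T.obj₁)⟦(1 : ℤ)⟧ ⟶ W, h = 0) : u = 0 := by
  obtain ⟨g, hg⟩ := Triangle.yoneda_exact₃ _ hT u hu
  rw [hg, hzero g, comp_zero]

lemma aux_factor_src {T : Triangle C} (hT : T ∈ distTriang C) {W : C}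
    (u : W ⟶ T.obj₂) (hzero : ∀ h : W ⟶ T.obj₃, h = 0) :
    ∃ v : W ⟶ T.obj₁, u = v ≫ T.mor₁ :=
  Triangle.coyoneda_exact₂ _ hT u (hzero _)

lemma aux_factor_tgt {T : Triangle C} (hT : T ∈ distTriang C) {W : C}
    (u : T.obj₂ ⟶ W) (hzero : ∀ h : T.obj₁ ⟶ W, h = 0) :
    ∃ v : T.obj₃ ⟶ W, u = T.mor₂ ≫ v :=
  Triangle.yoneda_exact₂ _ hT u (by rw [hzero (T.mor₁ ≫ u)])

lemma aux_le_of_hom {n : ℤ} {X : C}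
    (h : ∀ (Y : C), t.ge (n + 1) Y → ∀ f : X ⟶ Y, f = 0) : t.le n X := by
  obtain ⟨A, B, hA, hB, f, g, w, hT⟩ := t.exists_triangle X n (n + 1) rfl
  -- g = 0, so id_B factors through A⟦1⟧
  have hg : g = 0 := h B hB g
  obtain ⟨r, hr⟩ := Triangle.yoneda_exact₃ _ hT (𝟙 B) (by subst hg; exact zero_comp)
  have hr0 : r = 0 := by
    have hA' : t.le (n - 1) ((A : C)⟦(1 : ℤ)⟧) := t.le_shift n 1 (n - 1) (by omega) A hA
    exact aux_homzero t (show n - 1 < n + 1 by omega) hA' hB r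
  have hB0 : IsZero B := by
    rw [IsZero.iff_id_eq_zero, hr, hr0, comp_zero]; rfl
  -- then f is an isomorphism
  have : IsIso f := (Triangle.isZero₃_iff_isIso₁ _ hT).1 hB0
  exact (ObjectProperty.prop_iff_of_iso (t.le n) (asIso f)).1 hA

lemma aux_ge_of_hom {n : ℤ} {X : C}
    (h : ∀ (Y : C), t.le (n - 1) Y → ∀ f : Y ⟶ X, f = 0) : t.ge n X := by
  obtain ⟨A, B, hA, hB, f, g, w, hT⟩ := t.exists_triangle X (n - 1) n (by omega)
  have hf : f = 0 := h A hA f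
  -- id_A factors through B⟦-1⟧
  obtain ⟨r, hr⟩ := Triangle.coyoneda_exact₂ _ (inv_rot_of_distTriang _ hT) (𝟙 A)
    (by subst hf; exact comp_zero)
  have hr0 : r = 0 := by
    have hB' : t.ge (n + 1) ((B : C)⟦(-1 : ℤ)⟧) := t.ge_shift n (-1) (n + 1) (by omega) B hB
    exact aux_homzero t (show n - 1 < n + 1 by omega) hA hB' r
  have hA0 : IsZero A := by
    rw [IsZero.iff_id_eq_zero, hr, hr0, zero_comp]; rfl
  have : IsIso g := (Triangle.isZero₁_iff_isIso₂ _ hT).1 hA0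
  exact (ObjectProperty.prop_iff_of_iso (t.ge n) (asIso g).symm).1 hB

lemma aux_isZero_le (n : ℤ) {X : C} (h : IsZero X) : t.le n X :=
  aux_le_of_hom t (fun _ _ f => h.eq_of_src f 0)

lemma aux_isZero_ge (n : ℤ) {X : C} (h : IsZero X) : t.ge n X :=
  aux_ge_of_hom t (fun _ _ f => h.eq_of_tgt f 0)

lemma aux_isZero {a b : ℤ} (hab : a < b) {X : C} (hX : t.le a X) (hX' : t.ge b X) :
    IsZero X := by
  rw [IsZero.iff_id_eq_zero]
  exact aux_homzero t hab hX hX' _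

lemma aux_le_ext {n : ℤ} {T : Triangle C} (hT : T ∈ distTriang C)
    (h1 : t.le n T.obj₁) (h3 : t.le n T.obj₃) : t.le n T.obj₂ := by
  apply aux_le_of_hom
  intro Y hY f
  obtain ⟨v, hv⟩ := aux_factor_tgt hT f (fun h => aux_homzero t (by omega) h1 hY h)
  rw [hv, aux_homzero t (by omega) h3 hY v, comp_zero]

lemma aux_ge_ext {n : ℤ} {T : Triangle C} (hT : T ∈ distTriang C)
    (h1 : t.ge n T.obj₁) (h3 : t.ge n T.obj₃) : t.ge n T.obj₂ := by
  apply aux_ge_of_hom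
  intro Y hY f
  obtain ⟨v, hv⟩ := aux_factor_src hT f (fun h => aux_homzero t (by omega) hY h3 h)
  rw [hv, aux_homzero t (by omega) hY h1 v, zero_comp]

/-- Truncation triangle with extra bounds. -/
lemma aux_trunc {a b : ℤ} (hab : a ≤ b) {X : C} (hXa : t.ge a X) (hXb : t.le b X) :
    ∃ (A Q : C) (f : A ⟶ X) (g : X ⟶ Q) (w : Q ⟶ A⟦(1 : ℤ)⟧)
      (_ : Triangle.mk f g w ∈ distTriang C),
      t.le (b - 1) A ∧ t.ge a A ∧ t.ge b Q ∧ t.le b Q := by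
  obtain ⟨A, B, hA, hB, f, g, w, hT⟩ := t.exists_triangle X (b - 1) b (by omega)
  refine ⟨A, B, f, g, w, hT, hA, ?_, hB, ?_⟩
  · -- A ∈ GE a via inv rotation : B⟦-1⟧ → A → X
    have := aux_ge_ext t (inv_rot_of_distTriang _ hT)
      (t.ge_antitone (show a ≤ b + 1 by omega) _
        (t.ge_shift b (-1) (b+1) (by omega) B hB)) hXa
    exact this
  · -- B ∈ LE b via rotation : X → B → A⟦1⟧
    have := aux_le_ext t (rot_of_distTriang _ hT) hXb
      (t.le_monotone (show b - 2 ≤ b by omega) _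
        (t.le_shift (b-1) 1 (b-2) (by omega) A hA))
    exact this

end TS

section FinLength

variable {A : Type*} [Category A] [Abelian A]

lemma aux_simple_quot {X : A} (h : CategoryTheory.IsFiniteLength X) (hX : ¬ IsZero X) :
    ∃ (L : A) (_ : Simple L) (f : X ⟶ L), Epi f := by
  induction h with
  | of_isZero X h0 => exact absurd h0 hX
  | of_shortExact S hS h₁ h₃ _ =>
      exact ⟨S.X₃, h₃, S.g, hS.epi_g⟩

lemma aux_simple_sub {X : A} (h : CategoryTheory.IsFiniteLength X) (hX : ¬ IsZero X) :
    ∃ (L : A) (_ : Simple L) (f : L ⟶ X), Mono f := by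
  induction h with
  | of_isZero X h0 => exact absurd h0 hX
  | of_shortExact S hS h₁ h₃ ih =>
      by_cases h0 : IsZero S.X₁
      · have hf0 : S.f = 0 := h0.eq_of_src _ _
        have : Mono S.g := hS.exact.mono_g hf0
        have : Epi S.g := hS.epi_g
        have : IsIso S.g := isIso_of_mono_of_epi _
        exact ⟨S.X₃, h₃, inv S.g, by infer_instance⟩
      · obtain ⟨L, hL, f, hf⟩ := ih h0
        have := hS.mono_f
        exact ⟨L, hL, f ≫ S.f, by exact mono_comp _ _⟩

end FinLength



section MoreAux

lemma aux_unop_eq_zero_iff {B : Type*} [Category B] [Limits.HasZeroMorphisms B]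
    {X Y : Bᵒᵖ} (f : X ⟶ Y) : f.unop = 0 ↔ f = 0 := by
  constructor
  · intro h
    exact Quiver.Hom.unop_inj (by simpa using h)
  · rintro rfl
    rfl

lemma aux_isZero_unop {B : Type*} [Category B] [Limits.HasZeroMorphisms B]
    {X : Bᵒᵖ} (h : IsZero X) : IsZero (Opposite.unop X) := by
  rw [IsZero.iff_id_eq_zero] at h ⊢
  have : (𝟙 X).unop = 𝟙 (Opposite.unop X) := rfl
  rw [← this, h]
  rfl

lemma aux_conj_zero_iff {B : Type*} [Category B] [Limits.HasZeroMorphisms B]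
    {W X Y V : B} (e1 : W ≅ X) (e2 : Y ≅ V) (d : X ⟶ Y) :
    e1.hom ≫ d ≫ e2.hom = 0 ↔ d = 0 := by
  constructor
  · intro h
    have hd : d = e1.inv ≫ (e1.hom ≫ d ≫ e2.hom) ≫ e2.inv := by simp
    rw [hd, h, zero_comp, comp_zero]
  · intro h
    rw [h, zero_comp, comp_zero]

lemma aux_epi_ne_zero {B : Type*} [Category B] [Limits.HasZeroMorphisms B]
    {X Y : B} (f : X ⟶ Y) [Epi f] (h : ¬ IsZero Y) : f ≠ 0 := by
  intro h0
  apply h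
  rw [IsZero.iff_id_eq_zero]
  apply (cancel_epi f).1
  rw [h0, zero_comp, comp_zero]

lemma aux_mono_ne_zero {B : Type*} [Category B] [Limits.HasZeroMorphisms B]
    {X Y : B} (f : X ⟶ Y) [Mono f] (h : ¬ IsZero X) : f ≠ 0 := by
  intro h0
  apply h
  rw [IsZero.iff_id_eq_zero]
  apply (cancel_mono f).1
  rw [h0, zero_comp, comp_zero]

lemma aux_pre_iso_zero_iff {B : Type*} [Category B] [Limits.HasZeroMorphisms B]
    {W X Y : B} (e : W ≅ X) (d : X ⟶ Y) : e.hom ≫ d = 0 ↔ d = 0 := by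
  constructor
  · intro h
    have hd : d = e.inv ≫ (e.hom ≫ d) := by simp
    rw [hd, h, comp_zero]
  · intro h
    rw [h, comp_zero]

lemma aux_post_iso_zero_iff {B : Type*} [Category B] [Limits.HasZeroMorphisms B]
    {X Y V : B} (d : X ⟶ Y) (e : Y ≅ V) : d ≫ e.hom = 0 ↔ d = 0 := by
  constructor
  · intro h
    have hd : d = (d ≫ e.hom) ≫ e.inv := by simp
    rw [hd, h, zero_comp]
  · intro h
    rw [h, zero_comp]

end MoreAux

/-- Let `C`, `D` be triangulated categories with homologically finite t-structures `tC`, `tD`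
(every object is bounded for the t-structure), with hearts realized by fully faithful functors
`ιC : HC ⥤ C`, `ιD : HD ⥤ D` from abelian categories whose essential images are the hearts,
and with t-exact dualities `DC`, `DD` (contravariant triangulated self-equivalences squaring
to the identity, exchanging the `≤ 0` and `≥ 0` parts). Let `φ : C ⥤ D` be an exact fully
faithful functor with `φ ∘ DC ≅ DD ∘ φ`. If every object of the hearts has finite length and
every simple object `L` of the heart of `D` satisfies `DD L ≅ L`, then `φ` is t-exact and
sends simple objects of the heart of `C` to simple objects of the heart of `D`. -/
theorem statement0
    {C : Type*} [Category C] [HasZeroObject C] [Preadditive C] [HasShift C ℤ]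
    [∀ n : ℤ, (CategoryTheory.shiftFunctor C n).Additive] [Pretriangulated C]
    {D : Type*} [Category D] [HasZeroObject D] [Preadditive D] [HasShift D ℤ]
    [∀ n : ℤ, (CategoryTheory.shiftFunctor D n).Additive] [Pretriangulated D]
    (tC : TStructure C) (tD : TStructure D)
    -- the t-structures are homologically finite: every object is bounded
    (hfinC : ∀ X : C, ∃ a b : ℤ, tC.ge a X ∧ tC.le b X)
    (hfinD : ∀ X : D, ∃ a b : ℤ, tD.ge a X ∧ tD.le b X)
    -- abelian realizations of the hearts
    {HC : Type*} [Category HC] [Abelian HC] (ιC : HC ⥤ C) [ιC.Full] [ιC.Faithful]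
    (hHC : ∀ X : HC, tC.le 0 (ιC.obj X) ∧ tC.ge 0 (ιC.obj X))
    (hHC' : ∀ Y : C, tC.le 0 Y → tC.ge 0 Y → ∃ X : HC, Nonempty (ιC.obj X ≅ Y))
    {HD : Type*} [Category HD] [Abelian HD] (ιD : HD ⥤ D) [ιD.Full] [ιD.Faithful]
    (hHD : ∀ X : HD, tD.le 0 (ιD.obj X) ∧ tD.ge 0 (ιD.obj X))
    (hHD' : ∀ Y : D, tD.le 0 Y → tD.ge 0 Y → ∃ X : HD, Nonempty (ιD.obj X ≅ Y))
    -- the dualities: contravariant triangulated self-equivalences with `D² ≅ Id`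
    (DC : C ⥤ Cᵒᵖ) [DC.IsEquivalence] [DC.CommShift ℤ] [DC.IsTriangulated]
    (eDC : DC ⋙ DC.leftOp ≅ 𝟭 C)
    (DD : D ⥤ Dᵒᵖ) [DD.IsEquivalence] [DD.CommShift ℤ] [DD.IsTriangulated]
    (eDD : DD ⋙ DD.leftOp ≅ 𝟭 D)
    -- t-exactness of the dualities: they exchange the `≤ 0` and `≥ 0` parts
    (hDCle : ∀ X : C, tC.le 0 X → tC.ge 0 ((DC.obj X).unop))
    (hDCge : ∀ X : C, tC.ge 0 X → tC.le 0 ((DC.obj X).unop))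
    (hDDle : ∀ X : D, tD.le 0 X → tD.ge 0 ((DD.obj X).unop))
    (hDDge : ∀ X : D, tD.ge 0 X → tD.le 0 ((DD.obj X).unop))
    -- φ: an exact (triangulated) fully faithful functor commuting with the dualities
    (φ : C ⥤ D) [φ.CommShift ℤ] [φ.IsTriangulated] [φ.Full] [φ.Faithful]
    (hφD : DC ⋙ φ.op ≅ φ ⋙ DD)
    -- all objects of the hearts have finite length
    (hlenC : ∀ X : HC, CategoryTheory.IsFiniteLength X)
    (hlenD : ∀ X : HD, CategoryTheory.IsFiniteLength X)
    -- every simple object of the heart of `D` is fixed by the duality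
    (hsimp : ∀ L : HD, Simple L → Nonempty ((DD.obj (ιD.obj L)).unop ≅ ιD.obj L)) :
    ((∀ X : C, tC.le 0 X → tD.le 0 (φ.obj X)) ∧
      (∀ X : C, tC.ge 0 X → tD.ge 0 (φ.obj X))) ∧
    (∀ L : HC, Simple L → ∃ M : HD, Simple M ∧ Nonempty (φ.obj (ιC.obj L) ≅ ιD.obj M)) := by
  classical
  -- shift conversion isos for the dualities
  have DDshift : ∀ (W : D) (n m : ℤ), n + m = 0 →
      Nonempty ((DD.obj ((shiftFunctor D n).obj W)).unop ≅
        (shiftFunctor D m).obj ((DD.obj W).unop)) :=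
    fun W n m h =>
      ⟨(((DD.commShiftIso n).app W) ≪≫ ((shiftFunctorOpIso D n m h).app (DD.obj W))).unop.symm⟩
  -- t-exactness of the duality at arbitrary levels
  have hDDge' : ∀ (X : D) (n : ℤ), tD.le n X → tD.ge (-n) ((DD.obj X).unop) := by
    intro X n hX
    obtain ⟨e⟩ := DDshift X n (-n) (by omega)
    have h1 : tD.ge 0 ((DD.obj (X⟦n⟧)).unop) := hDDle _ (tD.le_shift n n 0 (by omega) X hX)
    have h2 : tD.ge 0 (((DD.obj X).unop)⟦(-n : ℤ)⟧) := (ObjectProperty.prop_iff_of_iso (tD.ge 0) e).1 h1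
    rw [← tD.shift_ge (-n) 0 (-n) (by omega)]
    rw [ObjectProperty.prop_shift_iff]
    exact h2
  have hDDle' : ∀ (X : D) (n : ℤ), tD.ge n X → tD.le (-n) ((DD.obj X).unop) := by
    intro X n hX
    obtain ⟨e⟩ := DDshift X n (-n) (by omega)
    have h1 : tD.le 0 ((DD.obj (X⟦n⟧)).unop) := hDDge _ (tD.ge_shift n n 0 (by omega) X hX)
    have h2 : tD.le 0 (((DD.obj X).unop)⟦(-n : ℤ)⟧) := (ObjectProperty.prop_iff_of_iso (tD.le 0) e).1 h1
    rw [← tD.shift_le (-n) 0 (-n) (by omega)]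
    rw [ObjectProperty.prop_shift_iff]
    exact h2
  -- the main boundedness lemmas on heart objects
  have mainLE : ∀ S : HC, tD.le 0 (φ.obj (ιC.obj S)) := by
    intro S
    by_contra hcon
    obtain ⟨hS0le, hS0ge⟩ := hHC S
    have hZle : tC.le 0 ((DC.obj (ιC.obj S)).unop) := hDCge _ hS0ge
    have hZge : tC.ge 0 ((DC.obj (ιC.obj S)).unop) := hDCle _ hS0le
    have eY : (DD.obj (φ.obj (ιC.obj S))).unop ≅ φ.obj ((DC.obj (ιC.obj S)).unop) :=
      (hφD.app (ιC.obj S)).unop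
    have hXnz : ¬ IsZero (φ.obj (ιC.obj S)) := fun h => hcon (aux_isZero_le tD 0 h)
    obtain ⟨a0, b0, hXge0, hXle0⟩ := hfinD (φ.obj (ιC.obj S))
    have hbdd : ∀ z : ℤ, tD.le z (φ.obj (ιC.obj S)) → a0 ≤ z := by
      intro z hz
      by_contra hlt
      exact hXnz (aux_isZero tD (show z < a0 by omega) hz hXge0)
    obtain ⟨b, hbmem, hbmin⟩ := Int.exists_least_of_bdd ⟨a0, hbdd⟩ ⟨b0, hXle0⟩
    have hb1 : 1 ≤ b := by
      by_contra hb
      exact hcon (tD.le_monotone (show b ≤ 0 by omega) _ hbmem)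
    obtain ⟨A, Q, fA, g, w, hT, hA_le, -, hQ_ge, hQ_le⟩ :=
      aux_trunc tD (min_le_right a0 b) (tD.ge_antitone (min_le_left a0 b) _ hXge0) hbmem
    have hQnz : ¬ IsZero Q := by
      intro h0
      have hle' : tD.le (b - 1) (φ.obj (ιC.obj S)) :=
        aux_le_ext tD hT hA_le (aux_isZero_le tD (b - 1) h0)
      have := hbmin _ hle'
      omega
    have hQb_le : tD.le 0 (Q⟦(b : ℤ)⟧) := tD.le_shift b b 0 (by omega) Q hQ_le
    have hQb_ge : tD.ge 0 (Q⟦(b : ℤ)⟧) := tD.ge_shift b b 0 (by omega) Q hQ_ge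
    obtain ⟨M, ⟨eM⟩⟩ := hHD' _ hQb_le hQb_ge
    have hMnz : ¬ IsZero M := by
      intro h
      apply hQnz
      have h1 : IsZero (Q⟦(b : ℤ)⟧) := IsZero.of_iso (auxF_isZero_obj ιD h) eM.symm
      have h2 : IsZero ((Q⟦(b : ℤ)⟧)⟦(-b : ℤ)⟧) := (shiftFunctor D (-b)).map_isZero h1
      exact IsZero.of_iso h2 ((shiftEquiv D b).unitIso.app Q)
    obtain ⟨L, hL, ε, hε⟩ := aux_simple_quot (hlenD M) hMnz
    haveI := hε
    haveI := hL
    have hεnz : ε ≠ 0 := aux_epi_ne_zero ε (fun h => (id_nonzero L) ((IsZero.iff_id_eq_zero L).1 h))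
    have hf0nz : ιD.map ε ≠ 0 := fun h => hεnz ((auxF_map_eq_zero_iff ιD ε).1 h)
    have e2 : ((ιD.obj M)⟦(-b : ℤ)⟧) ≅ Q :=
      (shiftFunctor D (-b)).mapIso eM ≪≫ ((shiftEquiv D b).unitIso.app Q).symm
    have hιL_ge : tD.ge b ((ιD.obj L)⟦(-b : ℤ)⟧) := tD.ge_shift 0 (-b) b (by omega) _ (hHD L).2
    have hA1_le : tD.le (b - 2) ((A)⟦(1 : ℤ)⟧) := tD.le_shift (b - 1) 1 (b - 2) (by omega) A hA_le
    have hYge : tD.ge (-b) ((DD.obj (φ.obj (ιC.obj S))).unop) := hDDge' _ b hbmem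
    have hYmb_ge : tD.ge 0 (((DD.obj (φ.obj (ιC.obj S))).unop)⟦(-b : ℤ)⟧) :=
      tD.ge_shift (-b) (-b) 0 (by omega) _ hYge
    set u : Q ⟶ (ιD.obj L)⟦(-b : ℤ)⟧ :=
      e2.inv ≫ (shiftFunctor D (-b)).map (ιD.map ε) with hu
    set f : φ.obj (ιC.obj S) ⟶ (ιD.obj L)⟦(-b : ℤ)⟧ := g ≫ u with hf
    have hfnz : f ≠ 0 := by
      intro h0
      have hu0 : u = 0 := by
        refine aux_cancel_pre hT u ?_ ?_
        · show g ≫ u = 0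
          rw [← hf]; exact h0
        · intro h
          exact aux_homzero tD (show b - 2 < b by omega) hA1_le hιL_ge h
      rw [hu] at hu0
      have h2 : (shiftFunctor D (-b)).map (ιD.map ε) = 0 :=
        (aux_pre_iso_zero_iff e2.symm _).1 hu0
      exact hf0nz ((Functor.map_eq_zero_iff _).1 h2)
    obtain ⟨edl⟩ := DDshift (ιD.obj L) (-b) b (by omega)
    obtain ⟨eL⟩ := hsimp L hL
    set g2 : ιD.obj L ⟶ ((DD.obj (φ.obj (ιC.obj S))).unop)⟦(-b : ℤ)⟧ :=
      ((shiftEquiv D b).unitIso.app (ιD.obj L)).hom ≫ (shiftFunctor D (-b)).map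
        ((edl ≪≫ (shiftFunctor D b).mapIso eL).inv ≫ (DD.map f).unop) with hg2
    have hg2nz : g2 ≠ 0 := by
      intro h0
      rw [hg2] at h0
      have h1 := (aux_pre_iso_zero_iff ((shiftEquiv D b).unitIso.app (ιD.obj L)) _).1 h0
      have h2 := (Functor.map_eq_zero_iff (shiftFunctor D (-b))).1 h1
      have h3 := (aux_pre_iso_zero_iff (edl ≪≫ (shiftFunctor D b).mapIso eL).symm _).1 h2
      have h4 := (aux_unop_eq_zero_iff (DD.map f)).1 h3
      exact hfnz ((auxF_map_eq_zero_iff DD f).1 h4)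
    obtain ⟨E, F, hE_le, hF_ge, pE, qE, w2, hT2⟩ := tD.exists_triangle
      (((DD.obj (φ.obj (ιC.obj S))).unop)⟦(-b : ℤ)⟧) 0 1 rfl
    have hE_ge : tD.ge 0 E := aux_ge_ext tD (inv_rot_of_distTriang _ hT2)
      (tD.ge_antitone (by omega) _ (tD.ge_shift 1 (-1) 2 (by omega) F hF_ge)) hYmb_ge
    obtain ⟨Ebar, ⟨eE⟩⟩ := hHD' E hE_le hE_ge
    obtain ⟨γ, hγ⟩ := aux_factor_src hT2 g2
      (fun h => aux_homzero tD (show (0 : ℤ) < 1 by omega) (hHD L).1 hF_ge h)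
    have hγnz : γ ≠ 0 := fun h => hg2nz (by rw [hγ, h, zero_comp]; rfl)
    have hγbnz : ιD.preimage (γ ≫ eE.inv) ≠ 0 := by
      intro h0
      have h1 : γ ≫ eE.inv = 0 := by
        rw [← ιD.map_preimage (γ ≫ eE.inv), h0, auxF_map_zero ιD]
      exact hγnz ((aux_post_iso_zero_iff γ eE.symm).1 h1)
    have hvz : (ιD.map ε ≫ γ) ≠ 0 := by
      intro h0
      have h1 : ε ≫ ιD.preimage (γ ≫ eE.inv) = 0 := by
        apply (auxF_map_eq_zero_iff ιD _).1
        rw [Functor.map_comp, ιD.map_preimage]; exact (Category.assoc _ _ _).symm.trans (by rw [h0]; exact zero_comp)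
      have h2 : ιD.preimage (γ ≫ eE.inv) = 0 :=
        (cancel_epi ε).1 (by rw [h1, comp_zero])
      exact hγbnz h2
    have hv : ιD.map ε ≫ g2 ≠ 0 := by
      rw [hγ]
      intro h0
      apply hvz
      refine aux_cancel_post hT2 (ιD.map ε ≫ γ) (by rw [Category.assoc]; exact h0) ?_
      intro h
      exact aux_homzero tD (show (0 : ℤ) < 2 by omega) (hHD M).1
        (tD.ge_shift 1 (-1) 2 (by omega) F hF_ge) h
    set m : φ.obj (ιC.obj S) ⟶ ((((DD.obj (φ.obj (ιC.obj S))).unop)⟦(-b : ℤ)⟧)⟦(-b : ℤ)⟧) :=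
      f ≫ (shiftFunctor D (-b)).map g2 with hm
    have hmnz : m ≠ 0 := by
      intro h0
      have h1 : u ≫ (shiftFunctor D (-b)).map g2 = 0 := by
        refine aux_cancel_pre hT (u ≫ (shiftFunctor D (-b)).map g2) ?_ ?_
        · show g ≫ (u ≫ (shiftFunctor D (-b)).map g2) = 0
          rw [← Category.assoc, ← hf, ← hm]; exact h0
        · intro h
          exact aux_homzero tD (show b - 2 < b by omega) hA1_le
            (tD.ge_shift 0 (-b) b (by omega) _ hYmb_ge) h
      rw [hu, Category.assoc] at h1
      have h2 := (aux_pre_iso_zero_iff e2.symm _).1 h1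
      rw [← Functor.map_comp] at h2
      exact hv ((Functor.map_eq_zero_iff (shiftFunctor D (-b))).1 h2)
    have em : (((((DD.obj (φ.obj (ιC.obj S))).unop)⟦(-b : ℤ)⟧)⟦(-b : ℤ)⟧)) ≅
        φ.obj ((((DC.obj (ιC.obj S)).unop)⟦(-b : ℤ)⟧)⟦(-b : ℤ)⟧) :=
      (shiftFunctor D (-b)).mapIso ((shiftFunctor D (-b)).mapIso eY ≪≫
        ((φ.commShiftIso (-b : ℤ)).app ((DC.obj (ιC.obj S)).unop)).symm) ≪≫
        ((φ.commShiftIso (-b : ℤ)).app (((DC.obj (ιC.obj S)).unop)⟦(-b : ℤ)⟧)).symm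
    have hZ2 : tC.ge (2 * b) ((((DC.obj (ιC.obj S)).unop)⟦(-b : ℤ)⟧)⟦(-b : ℤ)⟧) := by
      have h1 : tC.ge b (((DC.obj (ιC.obj S)).unop)⟦(-b : ℤ)⟧) :=
        tC.ge_shift 0 (-b) b (by omega) _ hZge
      exact tC.ge_shift b (-b) (2 * b) (by omega) _ h1
    have hfinal : m ≫ em.hom = 0 := by
      rw [← φ.map_preimage (m ≫ em.hom),
        aux_homzero tC (show (0 : ℤ) < 2 * b by omega) hS0le hZ2 (φ.preimage (m ≫ em.hom))]
      exact auxF_map_zero φ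
    exact hmnz ((aux_post_iso_zero_iff m em).1 hfinal)
  have mainGE : ∀ S : HC, tD.ge 0 (φ.obj (ιC.obj S)) := by
    intro S
    by_contra hcon
    obtain ⟨hS0le, hS0ge⟩ := hHC S
    have hZle : tC.le 0 ((DC.obj (ιC.obj S)).unop) := hDCge _ hS0ge
    have eY : (DD.obj (φ.obj (ιC.obj S))).unop ≅ φ.obj ((DC.obj (ιC.obj S)).unop) :=
      (hφD.app (ιC.obj S)).unop
    have hXnz : ¬ IsZero (φ.obj (ιC.obj S)) := fun h => hcon (aux_isZero_ge tD 0 h)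
    obtain ⟨a0, b0, hXge0, hXle0⟩ := hfinD (φ.obj (ιC.obj S))
    have hbdd : ∀ z : ℤ, tD.ge z (φ.obj (ιC.obj S)) → z ≤ b0 := by
      intro z hz
      by_contra hlt
      exact hXnz (aux_isZero tD (show b0 < z by omega) hXle0 hz)
    obtain ⟨a, hamem, hamax⟩ := Int.exists_greatest_of_bdd ⟨b0, hbdd⟩ ⟨a0, hXge0⟩
    have ha1 : a ≤ -1 := by
      by_contra hb
      exact hcon (tD.ge_antitone (show (0 : ℤ) ≤ a by omega) _ hamem)
    obtain ⟨P, R, hP_le, hR_ge, ρ, g, w, hT⟩ :=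
      tD.exists_triangle (φ.obj (ιC.obj S)) a (a + 1) rfl
    have hR1_ge : tD.ge (a + 2) ((R)⟦(-1 : ℤ)⟧) :=
      tD.ge_shift (a + 1) (-1) (a + 2) (by omega) R hR_ge
    have hP_ge : tD.ge a P := aux_ge_ext tD (inv_rot_of_distTriang _ hT)
      (tD.ge_antitone (by omega) _ hR1_ge) hamem
    have hPnz : ¬ IsZero P := by
      intro h0
      have hge' : tD.ge (a + 1) (φ.obj (ιC.obj S)) :=
        aux_ge_ext tD hT (aux_isZero_ge tD (a + 1) h0) hR_ge
      have := hamax _ hge'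
      omega
    have hPa_le : tD.le 0 (P⟦(a : ℤ)⟧) := tD.le_shift a a 0 (by omega) P hP_le
    have hPa_ge : tD.ge 0 (P⟦(a : ℤ)⟧) := tD.ge_shift a a 0 (by omega) P hP_ge
    obtain ⟨M, ⟨eM⟩⟩ := hHD' _ hPa_le hPa_ge
    have hMnz : ¬ IsZero M := by
      intro h
      apply hPnz
      have h1 : IsZero (P⟦(a : ℤ)⟧) := IsZero.of_iso (auxF_isZero_obj ιD h) eM.symm
      have h2 : IsZero ((P⟦(a : ℤ)⟧)⟦(-a : ℤ)⟧) := (shiftFunctor D (-a)).map_isZero h1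
      exact IsZero.of_iso h2 ((shiftEquiv D a).unitIso.app P)
    obtain ⟨L, hL, μ, hμ⟩ := aux_simple_sub (hlenD M) hMnz
    haveI := hμ
    haveI := hL
    have hμnz : μ ≠ 0 :=
      aux_mono_ne_zero μ (fun h => (id_nonzero L) ((IsZero.iff_id_eq_zero L).1 h))
    have hf0nz : ιD.map μ ≠ 0 := fun h => hμnz ((auxF_map_eq_zero_iff ιD μ).1 h)
    have e2 : ((ιD.obj M)⟦(-a : ℤ)⟧) ≅ P :=
      (shiftFunctor D (-a)).mapIso eM ≪≫ ((shiftEquiv D a).unitIso.app P).symm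
    have hιL_le : tD.le a ((ιD.obj L)⟦(-a : ℤ)⟧) :=
      tD.le_shift 0 (-a) a (by omega) _ (hHD L).1
    set f : (ιD.obj L)⟦(-a : ℤ)⟧ ⟶ φ.obj (ιC.obj S) :=
      (shiftFunctor D (-a)).map (ιD.map μ) ≫ e2.hom ≫ ρ with hf
    have hfnz : f ≠ 0 := by
      intro h0
      have hu0 : (shiftFunctor D (-a)).map (ιD.map μ) ≫ e2.hom = 0 := by
        refine aux_cancel_post hT ((shiftFunctor D (-a)).map (ιD.map μ) ≫ e2.hom) ?_ ?_
        · show ((shiftFunctor D (-a)).map (ιD.map μ) ≫ e2.hom) ≫ ρ = 0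
          rw [Category.assoc, ← hf]
          exact h0
        · intro h
          exact aux_homzero tD (show a < a + 2 by omega) hιL_le hR1_ge h
      have h2 := (aux_post_iso_zero_iff _ e2).1 hu0
      exact hf0nz ((Functor.map_eq_zero_iff (shiftFunctor D (-a))).1 h2)
    obtain ⟨edl⟩ := DDshift (ιD.obj L) (-a) a (by omega)
    obtain ⟨eL⟩ := hsimp L hL
    set g3 : ((DD.obj (φ.obj (ιC.obj S))).unop)⟦(-a : ℤ)⟧ ⟶ ιD.obj L :=
      (shiftFunctor D (-a)).map ((DD.map f).unop ≫ (edl ≪≫ (shiftFunctor D a).mapIso eL).hom)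
        ≫ ((shiftEquiv D a).unitIso.app (ιD.obj L)).inv with hg3
    have hg3nz : g3 ≠ 0 := by
      intro h0
      rw [hg3] at h0
      have h1 := (aux_post_iso_zero_iff _ ((shiftEquiv D a).unitIso.app (ιD.obj L)).symm).1 h0
      have h2 := (Functor.map_eq_zero_iff (shiftFunctor D (-a))).1 h1
      have h3 := (aux_post_iso_zero_iff _ (edl ≪≫ (shiftFunctor D a).mapIso eL)).1 h2
      have h4 := (aux_unop_eq_zero_iff (DD.map f)).1 h3
      exact hfnz ((auxF_map_eq_zero_iff DD f).1 h4)
    have hYle : tD.le (-a) ((DD.obj (φ.obj (ιC.obj S))).unop) := hDDle' _ a hamem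
    have hYma_le : tD.le 0 (((DD.obj (φ.obj (ιC.obj S))).unop)⟦(-a : ℤ)⟧) :=
      tD.le_shift (-a) (-a) 0 (by omega) _ hYle
    obtain ⟨A₂, E₂, hA₂_le, hE₂_ge, p2, π2, w2, hT2⟩ :=
      tD.exists_triangle (((DD.obj (φ.obj (ιC.obj S))).unop)⟦(-a : ℤ)⟧) (-1) 0 (by omega)
    have hA₂1_le : tD.le (-2) ((A₂)⟦(1 : ℤ)⟧) := tD.le_shift (-1) 1 (-2) (by omega) A₂ hA₂_le
    have hE₂_le : tD.le 0 E₂ := aux_le_ext tD (rot_of_distTriang _ hT2) hYma_le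
      (tD.le_monotone (show (-2 : ℤ) ≤ 0 by omega) _ hA₂1_le)
    obtain ⟨Ebar, ⟨eE⟩⟩ := hHD' E₂ hE₂_le hE₂_ge
    obtain ⟨γ, hγ⟩ := aux_factor_tgt hT2 g3
      (fun h => aux_homzero tD (show (-1 : ℤ) < 0 by omega) hA₂_le (hHD L).2 h)
    have hγnz : γ ≠ 0 := fun h => hg3nz (by rw [hγ, h, comp_zero]; rfl)
    have hγbnz : ιD.preimage (eE.hom ≫ γ) ≠ 0 := by
      intro h0
      have h1 : eE.hom ≫ γ = 0 := by
        rw [← ιD.map_preimage (eE.hom ≫ γ), h0, auxF_map_zero ιD]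
      exact hγnz ((aux_pre_iso_zero_iff eE γ).1 h1)
    have hvz : γ ≫ ιD.map μ ≠ 0 := by
      intro h0
      have h1 : ιD.preimage (eE.hom ≫ γ) ≫ μ = 0 := by
        apply (auxF_map_eq_zero_iff ιD _).1
        rw [Functor.map_comp, ιD.map_preimage]; exact (Category.assoc _ _ _).trans ((congrArg (eE.hom ≫ ·) h0).trans comp_zero)
      have h2 : ιD.preimage (eE.hom ≫ γ) = 0 :=
        (cancel_mono μ).1 (by rw [h1, zero_comp])
      exact hγbnz h2
    have hv : g3 ≫ ιD.map μ ≠ 0 := by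
      rw [hγ]
      intro h0
      apply hvz
      refine aux_cancel_pre hT2 (γ ≫ ιD.map μ) (by rw [← Category.assoc]; exact h0) ?_
      intro h
      exact aux_homzero tD (show (-2 : ℤ) < 0 by omega) hA₂1_le (hHD M).2 h
    set m : (((DD.obj (φ.obj (ιC.obj S))).unop)⟦(-a : ℤ)⟧)⟦(-a : ℤ)⟧ ⟶ φ.obj (ιC.obj S) :=
      (shiftFunctor D (-a)).map g3 ≫ f with hm
    have hmnz : m ≠ 0 := by
      intro h0
      have h1 : (shiftFunctor D (-a)).map g3 ≫
          (shiftFunctor D (-a)).map (ιD.map μ) ≫ e2.hom = 0 := by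
        refine aux_cancel_post hT
          ((shiftFunctor D (-a)).map g3 ≫ (shiftFunctor D (-a)).map (ιD.map μ) ≫ e2.hom) ?_ ?_
        · show ((shiftFunctor D (-a)).map g3 ≫
            (shiftFunctor D (-a)).map (ιD.map μ) ≫ e2.hom) ≫ ρ = 0
          simp only [Category.assoc]
          rw [← hf, ← hm]
          exact h0
        · intro h
          exact aux_homzero tD (show a < a + 2 by omega)
            (tD.le_shift 0 (-a) a (by omega) _ hYma_le) hR1_ge h
      rw [← Category.assoc] at h1
      have h2 := (aux_post_iso_zero_iff _ e2).1 h1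
      rw [← Functor.map_comp] at h2
      exact hv ((Functor.map_eq_zero_iff (shiftFunctor D (-a))).1 h2)
    have em : ((((DD.obj (φ.obj (ιC.obj S))).unop)⟦(-a : ℤ)⟧)⟦(-a : ℤ)⟧) ≅
        φ.obj ((((DC.obj (ιC.obj S)).unop)⟦(-a : ℤ)⟧)⟦(-a : ℤ)⟧) :=
      (shiftFunctor D (-a)).mapIso ((shiftFunctor D (-a)).mapIso eY ≪≫
        ((φ.commShiftIso (-a : ℤ)).app ((DC.obj (ιC.obj S)).unop)).symm) ≪≫
        ((φ.commShiftIso (-a : ℤ)).app (((DC.obj (ιC.obj S)).unop)⟦(-a : ℤ)⟧)).symm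
    have hZ2 : tC.le (2 * a) ((((DC.obj (ιC.obj S)).unop)⟦(-a : ℤ)⟧)⟦(-a : ℤ)⟧) := by
      have h1 : tC.le a (((DC.obj (ιC.obj S)).unop)⟦(-a : ℤ)⟧) :=
        tC.le_shift 0 (-a) a (by omega) _ hZle
      exact tC.le_shift a (-a) (2 * a) (by omega) _ h1
    have hfinal : em.inv ≫ m = 0 := by
      rw [← φ.map_preimage (em.inv ≫ m),
        aux_homzero tC (show 2 * a < 0 by omega) hZ2 hS0ge (φ.preimage (em.inv ≫ m))]
      exact auxF_map_zero φ
    exact hmnz ((aux_pre_iso_zero_iff em.symm m).1 hfinal)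
  have heartφ : ∀ (W : C), tC.le 0 W → tC.ge 0 W →
      tD.le 0 (φ.obj W) ∧ tD.ge 0 (φ.obj W) := by
    intro W h1 h2
    obtain ⟨S, ⟨e⟩⟩ := hHC' W h1 h2
    have e' : φ.obj (ιC.obj S) ≅ φ.obj W := φ.mapIso e
    exact ⟨(ObjectProperty.prop_iff_of_iso (tD.le 0) e').1 (mainLE S),
      (ObjectProperty.prop_iff_of_iso (tD.ge 0) e').1 (mainGE S)⟩
  -- induction on the width of the bounded interval
  have main3 : ∀ (n : ℕ) (X : C) (a b : ℤ), (b - a).toNat ≤ n → tC.ge a X → tC.le b X →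
      tD.ge a (φ.obj X) ∧ tD.le b (φ.obj X) := by
    intro n
    induction n with
    | zero =>
        intro X a b hw hga hlb
        by_cases hba' : b = a
        · obtain rfl : b = a := hba'
          have h1 : tC.le 0 (X⟦b⟧) := tC.le_shift b b 0 (by omega) X hlb
          have h2 : tC.ge 0 (X⟦b⟧) := tC.ge_shift b b 0 (by omega) X hga
          obtain ⟨hl, hg⟩ := heartφ _ h1 h2
          have e : φ.obj (X⟦b⟧) ≅ (φ.obj X)⟦b⟧ := (φ.commShiftIso b).app X
          have hl' : tD.le 0 ((φ.obj X)⟦b⟧) := (ObjectProperty.prop_iff_of_iso (tD.le 0) e).1 hl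
          have hg' : tD.ge 0 ((φ.obj X)⟦b⟧) := (ObjectProperty.prop_iff_of_iso (tD.ge 0) e).1 hg
          constructor
          · rw [← tD.shift_ge b 0 b (by omega), ObjectProperty.prop_shift_iff]
            exact hg'
          · rw [← tD.shift_le b 0 b (by omega), ObjectProperty.prop_shift_iff]
            exact hl'
        · have hz : IsZero X := aux_isZero tC (show b < a by omega) hlb hga
          have hz' : IsZero (φ.obj X) := auxF_isZero_obj φ hz
          exact ⟨aux_isZero_ge tD a hz', aux_isZero_le tD b hz'⟩
    | succ n ih =>
        intro X a b hw hga hlb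
        by_cases hba : b ≤ a
        · exact ih X a b (by omega) hga hlb
        · obtain ⟨A, Q, f, g, w, hT, hA1, hA2, hQ1, hQ2⟩ :=
            aux_trunc tC (show a ≤ b by omega) hga hlb
          obtain ⟨hφA_ge, hφA_le⟩ := ih A a (b - 1) (by omega) hA2 hA1
          obtain ⟨hφQ_ge, hφQ_le⟩ := ih Q b b (by omega) hQ1 hQ2
          have hTD := φ.map_distinguished _ hT
          have hle : tD.le b (φ.obj X) :=
            aux_le_ext tD hTD (tD.le_monotone (by omega) _ hφA_le) hφQ_le
          have hge : tD.ge a (φ.obj X) :=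
            aux_ge_ext tD hTD hφA_ge (tD.ge_antitone (by omega) _ hφQ_ge)
          exact ⟨hge, hle⟩
  refine ⟨⟨?_, ?_⟩, ?_⟩
  · intro X hle
    obtain ⟨a, b, hga, _⟩ := hfinC X
    have hga' : tC.ge (min a 0) X := tC.ge_antitone (min_le_left a 0) X hga
    exact (main3 ((0 - min a 0).toNat) X (min a 0) 0 le_rfl hga' hle).2
  · intro X hge
    obtain ⟨a, b, _, hlb⟩ := hfinC X
    have hlb' : tC.le (max b 0) X := tC.le_monotone (le_max_left b 0) X hlb
    exact (main3 ((max b 0 - 0).toNat) X 0 (max b 0) le_rfl hge hlb').1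
  · intro S hSsimple
    haveI := hSsimple
    obtain ⟨M, ⟨eM⟩⟩ := hHD' (φ.obj (ιC.obj S)) (mainLE S) (mainGE S)
    obtain ⟨hS0le, hS0ge⟩ := hHC S
    have hZle : tC.le 0 ((DC.obj (ιC.obj S)).unop) := hDCge _ hS0ge
    have hZge : tC.ge 0 ((DC.obj (ιC.obj S)).unop) := hDCle _ hS0le
    obtain ⟨S', ⟨eS'⟩⟩ := hHC' _ hZle hZge
    have e' : (DC.obj (ιC.obj S')).unop ≅ ιC.obj S :=
      ((DC.mapIso eS').unop).symm ≪≫ eDC.app (ιC.obj S)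
    have hS'nz : ¬ IsZero S' := by
      intro h
      have h1 : IsZero (ιC.obj S') := auxF_isZero_obj ιC h
      have h2 : IsZero ((DC.obj (ιC.obj S')).unop) :=
        aux_isZero_unop (auxF_isZero_obj DC h1)
      have h3 : IsZero (ιC.obj S) := IsZero.of_iso h2 e'.symm
      have h4 : IsZero S := (auxF_isZero_iff ιC S).1 h3
      exact (id_nonzero S) ((IsZero.iff_id_eq_zero S).1 h4)
    have hS'simple : Simple S' := by
      constructor
      intro Yy f hmono
      constructor
      · intro hiso h0
        haveI := hiso
        haveI : Epi f := by infer_instance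
        exact aux_epi_ne_zero f hS'nz h0
      · intro hfnz
        have hQz : IsZero (cokernel f) := by
          by_contra hQ0
          have hgnz : cokernel.π f ≠ 0 := aux_epi_ne_zero _ hQ0
          have hd2nz : (DC.map (ιC.map (cokernel.π f))).unop ≠ 0 := by
            intro h
            have h1 := (aux_unop_eq_zero_iff _).1 h
            have h2 := (auxF_map_eq_zero_iff DC _).1 h1
            exact hgnz ((auxF_map_eq_zero_iff ιC _).1 h2)
          have hd1nz : (DC.map (ιC.map f)).unop ≠ 0 := by
            intro h
            have h1 := (aux_unop_eq_zero_iff _).1 h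
            have h2 := (auxF_map_eq_zero_iff DC _).1 h1
            exact hfnz ((auxF_map_eq_zero_iff ιC _).1 h2)
          obtain ⟨Qb, ⟨eQ⟩⟩ := hHC' ((DC.obj (ιC.obj (cokernel f))).unop)
            (hDCge _ (hHC _).2) (hDCle _ (hHC _).1)
          obtain ⟨Yb, ⟨eYb⟩⟩ := hHC' ((DC.obj (ιC.obj Yy)).unop)
            (hDCge _ (hHC _).2) (hDCle _ (hHC _).1)
          set qb : Qb ⟶ S :=
            ιC.preimage (eQ.hom ≫ (DC.map (ιC.map (cokernel.π f))).unop ≫ e'.hom) with hqb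
          set fb : S ⟶ Yb :=
            ιC.preimage (e'.inv ≫ (DC.map (ιC.map f)).unop ≫ eYb.inv) with hfb
          have hqbnz : qb ≠ 0 := by
            intro h
            have h1 : ιC.map qb = 0 := by rw [h, auxF_map_zero ιC]
            rw [hqb, ιC.map_preimage] at h1
            exact hd2nz ((aux_conj_zero_iff eQ e' _).1 h1)
          have hfbnz : fb ≠ 0 := by
            intro h
            have h1 : ιC.map fb = 0 := by rw [h, auxF_map_zero ιC]
            rw [hfb, ιC.map_preimage] at h1
            exact hd1nz ((aux_conj_zero_iff e'.symm eYb.symm _).1 h1)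
          haveI : Epi qb := epi_of_nonzero_to_simple hqbnz
          have hdd : (DC.map (ιC.map (cokernel.π f))).unop ≫ (DC.map (ιC.map f)).unop = 0 := by
            rw [← unop_comp, ← DC.map_comp, ← ιC.map_comp, cokernel.condition,
              auxF_map_zero ιC, auxF_map_zero DC]
            rfl
          have hcomp0 : qb ≫ fb = 0 := by
            apply (auxF_map_eq_zero_iff ιC _).1
            rw [Functor.map_comp, hqb, hfb, ιC.map_preimage, ιC.map_preimage]
            simp only [Category.assoc, Iso.hom_inv_id_assoc]
            rw [reassoc_of% hdd]
            simp
          have hfb0 : fb = 0 := (cancel_epi qb).1 (by rw [hcomp0, comp_zero])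
          exact hfbnz hfb0
        have hπ0 : cokernel.π f = 0 := hQz.eq_of_tgt _ _
        haveI : Epi f := Preadditive.epi_of_cokernel_zero hπ0
        exact isIso_of_mono_of_epi f
    haveI := hS'simple
    have hMnz : ¬ IsZero M := by
      intro h
      have h1 : IsZero (φ.obj (ιC.obj S)) := IsZero.of_iso (auxF_isZero_obj ιD h) eM.symm
      have h2 : IsZero S := (auxF_isZero_iff ιC _).1 ((auxF_isZero_iff φ _).1 h1)
      exact (id_nonzero S) ((IsZero.iff_id_eq_zero S).1 h2)
    obtain ⟨L, hL, ε, hε⟩ := aux_simple_quot (hlenD M) hMnz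
    haveI := hε
    haveI := hL
    have hεnz : ε ≠ 0 :=
      aux_epi_ne_zero ε (fun h => (id_nonzero L) ((IsZero.iff_id_eq_zero L).1 h))
    set f1 : φ.obj (ιC.obj S) ⟶ ιD.obj L := eM.inv ≫ ιD.map ε with hf1
    have hf1nz : f1 ≠ 0 := by
      intro h
      rw [hf1] at h
      have h1 := (aux_pre_iso_zero_iff eM.symm _).1 h
      exact hεnz ((auxF_map_eq_zero_iff ιD _).1 h1)
    obtain ⟨eL⟩ := hsimp L hL
    set g1 : ιD.obj L ⟶ (DD.obj (φ.obj (ιC.obj S))).unop := eL.inv ≫ (DD.map f1).unop with hg1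
    have hg1nz : g1 ≠ 0 := by
      intro h
      rw [hg1] at h
      have h1 := (aux_pre_iso_zero_iff eL.symm _).1 h
      have h2 := (aux_unop_eq_zero_iff _).1 h1
      exact hf1nz ((auxF_map_eq_zero_iff DD _).1 h2)
    have eY : (DD.obj (φ.obj (ιC.obj S))).unop ≅ φ.obj ((DC.obj (ιC.obj S)).unop) :=
      (hφD.app (ιC.obj S)).unop
    have eYS : φ.obj (ιC.obj S') ≅ (DD.obj (φ.obj (ιC.obj S))).unop := φ.mapIso eS' ≪≫ eY.symm
    have hYle : tD.le 0 ((DD.obj (φ.obj (ιC.obj S))).unop) :=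
      (ObjectProperty.prop_iff_of_iso (tD.le 0) eYS).1 (mainLE S')
    have hYge : tD.ge 0 ((DD.obj (φ.obj (ιC.obj S))).unop) :=
      (ObjectProperty.prop_iff_of_iso (tD.ge 0) eYS).1 (mainGE S')
    obtain ⟨M', ⟨eM'⟩⟩ := hHD' _ hYle hYge
    set γb : L ⟶ M' := ιD.preimage (g1 ≫ eM'.inv) with hγb
    have hγbnz : γb ≠ 0 := by
      intro h
      have h1 : ιD.map γb = 0 := by rw [h, auxF_map_zero ιD]
      rw [hγb, ιD.map_preimage] at h1
      exact hg1nz ((aux_post_iso_zero_iff g1 eM'.symm).1 h1)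
    have hcompb : ε ≫ γb ≠ 0 := fun h => hγbnz ((cancel_epi ε).1 (by rw [h, comp_zero]))
    have htot : f1 ≫ g1 ≠ 0 := by
      intro h
      apply hcompb
      apply (auxF_map_eq_zero_iff ιD _).1
      rw [Functor.map_comp, hγb, ιD.map_preimage]
      have h2 : ιD.map ε ≫ g1 ≫ eM'.inv = eM.hom ≫ (f1 ≫ g1) ≫ eM'.inv := by
        rw [hf1]
        simp
      rw [h2, h]
      simp
    set σ : ιC.obj S ⟶ ιC.obj S' := φ.preimage ((f1 ≫ g1) ≫ eYS.inv) with hσ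
    have hσmap : φ.map σ = (f1 ≫ g1) ≫ eYS.inv := by rw [hσ, φ.map_preimage]
    have hσnz : σ ≠ 0 := by
      intro h
      have h1 : (f1 ≫ g1) ≫ eYS.inv = 0 := by rw [← hσmap, h, auxF_map_zero φ]
      exact htot ((aux_post_iso_zero_iff _ eYS.symm).1 h1)
    set σb : S ⟶ S' := ιC.preimage σ with hσb
    have hσbnz : σb ≠ 0 := by
      intro h
      have h1 : ιC.map σb = 0 := by rw [h, auxF_map_zero ιC]
      rw [hσb, ιC.map_preimage] at h1
      exact hσnz h1
    haveI : IsIso σb := isIso_of_hom_simple hσbnz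
    have hισ : ιC.map σb = σ := by rw [hσb, ιC.map_preimage]
    haveI : IsIso σ := by rw [← hισ]; infer_instance
    haveI : IsIso (φ.map σ) := inferInstance
    haveI : IsIso ((f1 ≫ g1) ≫ eYS.inv) := by rw [← hσmap]; infer_instance
    haveI hiso12 : IsIso (f1 ≫ g1) := by
      have h1 : f1 ≫ g1 = ((f1 ≫ g1) ≫ eYS.inv) ≫ eYS.hom := by simp
      rw [h1]
      infer_instance
    set r : ιD.obj L ⟶ ιD.obj M := g1 ≫ inv (f1 ≫ g1) ≫ eM.inv with hr
    have hεr : ιD.map ε ≫ r = 𝟙 (ιD.obj M) := by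
      have h1 : ιD.map ε = eM.hom ≫ f1 := by rw [hf1]; simp
      rw [hr, h1]
      simp only [Category.assoc]
      rw [← Category.assoc f1 g1, IsIso.hom_inv_id_assoc]
      simp
    set rb : L ⟶ M := ιD.preimage r with hrb
    have hεrb : ε ≫ rb = 𝟙 M := by
      apply ιD.map_injective
      rw [Functor.map_comp, hrb, ιD.map_preimage, hεr, CategoryTheory.Functor.map_id]
    haveI : IsSplitMono ε := IsSplitMono.mk' ⟨rb, hεrb⟩
    haveI : IsIso ε := isIso_of_mono_of_epi ε
    exact ⟨M, Simple.of_iso (asIso ε), ⟨eM.symm⟩⟩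
end

section
/- Let C and D be triangulated categories equipped with bounded t-structures with hearts C♥ and D♥, and let φ : C → D be an exact (triangulated) fully faithful functor that is t-exact. Assume that every object of D♥ has finite length and that every simple object of D♥ is isomorphic to φ(X) for some object X of C♥. Then φ is an equivalence of triangulated categories, and it restricts to an equivalence of abelian categories C♥ ≃ D♥. -/
open CategoryTheory Limits Triangulated CategoryTheory.Pretriangulated

set_option linter.unusedSectionVars false


namespace Statement4Aux

section Triang

variable {C : Type*} [Category C] [HasZeroObject C] [Preadditive C] [HasShift C ℤ]
  [∀ n : ℤ, (CategoryTheory.shiftFunctor C n).Additive] [Pretriangulated C]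
  (t : TStructure C)

lemma tzero {X Y : C} (f : X ⟶ Y) (a b : ℤ) (h : a < b)
    (hX : t.le a X) (hY : t.ge b Y) : f = 0 := by
  have h1 : t.le 0 (X⟦a⟧) := t.le_shift a a 0 (by omega) X hX
  have h2 : t.ge 1 (Y⟦a⟧) := t.ge_antitone (by omega : (1:ℤ) ≤ b - a) _
      (t.ge_shift b a (b - a) (by omega) Y hY)
  have h3 : (shiftFunctor C a).map f = 0 := t.zero' _ h1 h2
  apply (shiftFunctor C a).map_injective
  rw [h3, Functor.map_zero]

lemma le_orth (n : ℤ) (X : C)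
    (h : ∀ W : C, t.ge (n+1) W → ∀ f : X ⟶ W, f = 0) : t.le n X := by
  obtain ⟨A, B, hA, hB, a, p, w, dist⟩ := t.exists_triangle X n (n+1) rfl
  obtain ⟨r, hr⟩ := Triangle.yoneda_exact₃ _ dist (𝟙 B)
    (by show p ≫ 𝟙 B = 0; rw [Category.comp_id]; exact h B hB p)
  have hr0 : r = 0 := tzero t r (n-1) (n+1) (by omega)
    (t.le_shift n 1 (n-1) (by omega) A hA) hB
  have hB0 : IsZero B := by
    rw [IsZero.iff_id_eq_zero, hr, hr0, comp_zero]; rfl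
  have : IsIso a := (Triangle.isZero₃_iff_isIso₁ _ dist).1 hB0
  exact (ObjectProperty.prop_iff_of_iso (t.le n) (asIso a)).1 hA

lemma ge_orth (n : ℤ) (X : C)
    (h : ∀ W : C, t.le (n-1) W → ∀ f : W ⟶ X, f = 0) : t.ge n X := by
  obtain ⟨A, B, hA, hB, a, p, w, dist⟩ := t.exists_triangle X (n-1) n (by omega)
  have ha : a = 0 := h A hA a
  obtain ⟨g, hg⟩ := Triangle.coyoneda_exact₁ _ dist (𝟙 (A⟦(1:ℤ)⟧))
    (by show 𝟙 (A⟦(1:ℤ)⟧) ≫ (shiftFunctor C (1:ℤ)).map a = 0; rw [Category.id_comp, ha, Functor.map_zero])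
  have hg0 : g = 0 := tzero t g (n-2) n (by omega)
    (t.le_shift (n-1) 1 (n-2) (by omega) A hA) hB
  have hA1 : IsZero (A⟦(1:ℤ)⟧) := by
    rw [IsZero.iff_id_eq_zero, hg, hg0, zero_comp]; rfl
  have hA0 : IsZero A := by
    rw [IsZero.iff_id_eq_zero]
    apply (shiftFunctor C (1:ℤ)).map_injective
    rw [CategoryTheory.Functor.map_id, Functor.map_zero]
    exact (IsZero.iff_id_eq_zero _).1 hA1
  have : IsIso p := (Triangle.isZero₁_iff_isIso₂ _ dist).1 hA0
  exact (ObjectProperty.prop_iff_of_iso (t.ge n) (asIso p)).2 hB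

lemma le_ext₂ (T : Triangle C) (hT : T ∈ distTriang C) (n : ℤ)
    (h₁ : t.le n T.obj₁) (h₃ : t.le n T.obj₃) : t.le n T.obj₂ := by
  apply le_orth t n
  intro W hW f
  have h1 : T.mor₁ ≫ f = 0 := tzero t _ n (n+1) (by omega) h₁ hW
  obtain ⟨g, hg⟩ := Triangle.yoneda_exact₂ _ hT f h1
  rw [hg, tzero t g n (n+1) (by omega) h₃ hW, comp_zero]

lemma ge_ext₂ (T : Triangle C) (hT : T ∈ distTriang C) (n : ℤ)
    (h₁ : t.ge n T.obj₁) (h₃ : t.ge n T.obj₃) : t.ge n T.obj₂ := by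
  apply ge_orth t n
  intro W hW f
  have h1 : f ≫ T.mor₂ = 0 := tzero t _ (n-1) n (by omega) hW h₃
  obtain ⟨g, hg⟩ := Triangle.coyoneda_exact₂ _ hT f h1
  rw [hg, tzero t g (n-1) n (by omega) hW h₁, zero_comp]

end Triang


section Triang

variable {C : Type*} [Category C] [HasZeroObject C] [Preadditive C] [HasShift C ℤ]
  [∀ n : ℤ, (CategoryTheory.shiftFunctor C n).Additive] [Pretriangulated C]
  (t : TStructure C)

lemma cone_heart {A B Z : C} {u : A ⟶ B} {v : B ⟶ Z} {w : Z ⟶ A⟦(1:ℤ)⟧}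
    (dist : Triangle.mk u v w ∈ distTriang C)
    (hA1 : t.le 0 A) (hA2 : t.ge 0 A) (hB1 : t.le 0 B) (hB2 : t.ge 0 B)
    (hmono : ∀ N : C, t.le 0 N → t.ge 0 N → ∀ ψ : N ⟶ A, ψ ≫ u = 0 → ψ = 0) :
    t.le 0 Z ∧ t.ge 0 Z ∧
    (∀ (N : C) (φ : B ⟶ N), u ≫ φ = 0 → ∃ φ' : Z ⟶ N, v ≫ φ' = φ) ∧
    (∀ (N : C) (φ₁ φ₂ : Z ⟶ N), t.ge 0 N → v ≫ φ₁ = v ≫ φ₂ → φ₁ = φ₂) := by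
  have rot := rot_of_distTriang _ dist
  have hA1' : t.le 0 (A⟦(1:ℤ)⟧) :=
    t.le_monotone (by omega : (-1:ℤ) ≤ 0) _ (t.le_shift 0 1 (-1) (by omega) A hA1)
  have hA2' : t.ge (-1) (A⟦(1:ℤ)⟧) := t.ge_shift 0 1 (-1) (by omega) A hA2
  have hZ1 : t.le 0 Z := le_ext₂ t _ rot 0 hB1 hA1'
  have hZge1 : t.ge (-1) Z :=
    ge_ext₂ t _ rot (-1) (t.ge_antitone (by omega : (-1:ℤ) ≤ 0) _ hB2) hA2'
  -- truncation of Z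
  obtain ⟨Zm, Z₀, hZm, hZ₀, i, p, q, tdist⟩ := t.exists_triangle Z (-1) 0 (by omega)
  have hZmge : t.ge (-1) Zm := by
    refine ge_ext₂ t _ (inv_rot_of_distTriang _ tdist) (-1) ?_ ?_
    · exact t.ge_antitone (by omega : (-1:ℤ) ≤ 1) _ (t.ge_shift 0 (-1) 1 (by omega) Z₀ hZ₀)
    · exact hZge1
  -- the object K := Zm⟦-1⟧ is in the heart
  have hK1 : t.le 0 (Zm⟦(-1:ℤ)⟧) := t.le_shift (-1) (-1) 0 (by omega) Zm hZm
  have hK2 : t.ge 0 (Zm⟦(-1:ℤ)⟧) := t.ge_shift (-1) (-1) 0 (by omega) Zm hZmge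
  set sh := shiftFunctorCompIsoId C (1:ℤ) (-1:ℤ) (by omega) with hsh
  set ψ : Zm⟦(-1:ℤ)⟧ ⟶ A :=
    (shiftFunctor C (-1:ℤ)).map i ≫ (shiftFunctor C (-1:ℤ)).map w ≫ sh.hom.app A with hψdef
  have h31 := comp_distTriang_mor_zero₃₁ _ dist
  have hψu : ψ ≫ u = 0 := by
    have hnat := sh.hom.naturality u
    dsimp at hnat
    rw [hψdef]
    rw [Category.assoc, Category.assoc, ← hnat]
    rw [← Category.assoc ((shiftFunctor C (-1:ℤ)).map w), ← Functor.map_comp]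
    change w ≫ (shiftFunctor C (1:ℤ)).map u = 0 at h31
    rw [h31, Functor.map_zero, zero_comp, comp_zero]
  have hψ0 : ψ = 0 := hmono _ hK1 hK2 ψ hψu
  have hiw : i ≫ w = 0 := by
    apply (shiftFunctor C (-1:ℤ)).map_injective
    have h5 : ψ ≫ sh.inv.app A = 0 := by rw [hψ0, zero_comp]
    rw [hψdef, Category.assoc, Category.assoc, Iso.hom_inv_id_app] at h5
    rw [Functor.map_comp, Functor.map_zero]
    simpa using h5
  obtain ⟨g, hg⟩ := Triangle.coyoneda_exact₃ _ dist i hiw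
  have hg0 : g = 0 := tzero t g (-1) 0 (by omega) hZm hB2
  have hi0 : i = 0 := by rw [hg, hg0, zero_comp]; rfl
  obtain ⟨g', hg'⟩ := Triangle.coyoneda_exact₁ _ tdist (𝟙 (Zm⟦(1:ℤ)⟧))
    (by show 𝟙 (Zm⟦(1:ℤ)⟧) ≫ (shiftFunctor C (1:ℤ)).map i = 0; rw [Category.id_comp, hi0, Functor.map_zero])
  have hg'0 : g' = 0 := tzero t g' (-2) 0 (by omega)
    (t.le_shift (-1) 1 (-2) (by omega) Zm hZm) hZ₀
  have hZm1 : IsZero (Zm⟦(1:ℤ)⟧) := by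
    rw [IsZero.iff_id_eq_zero, hg', hg'0, zero_comp]; rfl
  have hZm0 : IsZero Zm := by
    rw [IsZero.iff_id_eq_zero]
    apply (shiftFunctor C (1:ℤ)).map_injective
    rw [CategoryTheory.Functor.map_id, Functor.map_zero]
    exact (IsZero.iff_id_eq_zero _).1 hZm1
  have hp : IsIso p := (Triangle.isZero₁_iff_isIso₂ _ tdist).1 hZm0
  have hZ2 : t.ge 0 Z := (ObjectProperty.prop_iff_of_iso (t.ge 0) (asIso p)).2 hZ₀
  refine ⟨hZ1, hZ2, ?_, ?_⟩
  · intro N φ hφ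
    obtain ⟨φ', hφ'⟩ := Triangle.yoneda_exact₂ _ dist φ hφ
    exact ⟨φ', hφ'.symm⟩
  · intro N φ₁ φ₂ hN h12
    have hsub : v ≫ (φ₁ - φ₂) = 0 := by
      rw [Preadditive.comp_sub, h12, sub_self]
    obtain ⟨g'', hg''⟩ := Triangle.yoneda_exact₃ _ dist (φ₁ - φ₂) hsub
    have : g'' = 0 := tzero t g'' (-1) 0 (by omega)
      (t.le_shift 0 1 (-1) (by omega) A hA1) hN
    rw [this, comp_zero] at hg''
    exact sub_eq_zero.1 hg''

end Triang

section FF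

variable {A : Type*} [Category A] {B : Type*} [Category B] [HasZeroMorphisms B]
  (F : A ⥤ B) [F.Full] [F.Faithful]

omit [F.Faithful] in
lemma ffIsZero {M : A} (hM : IsZero M) : IsZero (F.obj M) := by
  rw [IsZero.iff_id_eq_zero]
  have h : F.preimage (0 : F.obj M ⟶ F.obj M) = 𝟙 M := hM.eq_of_src _ _
  rw [← CategoryTheory.Functor.map_id, ← h, Functor.map_preimage]

lemma ffMapZero [HasZeroObject A] [HasZeroMorphisms A] {M M' : A} :
    F.map (0 : M ⟶ M') = 0 := by
  obtain ⟨O, hO⟩ := HasZeroObject.zero (C := A)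
  have : (0 : M ⟶ M') = (0 : M ⟶ O) ≫ (0 : O ⟶ M') := by rw [zero_comp]
  rw [this, Functor.map_comp]
  have h2 : F.map (0 : O ⟶ M') = 0 := (ffIsZero F hO).eq_of_src _ _
  rw [h2, comp_zero]

lemma ffMapEqZero_iff [HasZeroObject A] [HasZeroMorphisms A] {M M' : A} (f : M ⟶ M') :
    F.map f = 0 ↔ f = 0 := by
  constructor
  · intro h
    apply F.map_injective
    rw [h, ffMapZero]
  · rintro rfl
    exact ffMapZero F

end FF


end Statement4Aux

set_option maxHeartbeats 1000000 in
/-- Let `C`, `D` be triangulated categories with bounded t-structures `tC`, `tD` whose hearts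
are realized by fully faithful functors `ιC : HC ⥤ C`, `ιD : HD ⥤ D` from abelian categories
with essential images the hearts. Let `φ : C ⥤ D` be an exact (triangulated) fully faithful
t-exact functor. If every object of the heart of `D` has finite length and every simple object
of the heart of `D` is isomorphic to the image under `φ` of an object of the heart of `C`,
then `φ` is an equivalence of triangulated categories and restricts to an equivalence of the
hearts. -/
theorem statement4
    {C : Type*} [Category C] [HasZeroObject C] [Preadditive C] [HasShift C ℤ]
    [∀ n : ℤ, (CategoryTheory.shiftFunctor C n).Additive] [Pretriangulated C]
    {D : Type*} [Category D] [HasZeroObject D] [Preadditive D] [HasShift D ℤ]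
    [∀ n : ℤ, (CategoryTheory.shiftFunctor D n).Additive] [Pretriangulated D]
    (tC : TStructure C) (tD : TStructure D)
    -- the t-structures are bounded
    (hbC : ∀ X : C, ∃ a b : ℤ, tC.ge a X ∧ tC.le b X)
    (hbD : ∀ X : D, ∃ a b : ℤ, tD.ge a X ∧ tD.le b X)
    -- abelian realizations of the hearts
    {HC : Type*} [Category HC] [Abelian HC] (ιC : HC ⥤ C) [ιC.Full] [ιC.Faithful]
    (hHC : ∀ X : HC, tC.le 0 (ιC.obj X) ∧ tC.ge 0 (ιC.obj X))
    (hHC' : ∀ Y : C, tC.le 0 Y → tC.ge 0 Y → ∃ X : HC, Nonempty (ιC.obj X ≅ Y))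
    {HD : Type*} [Category HD] [Abelian HD] (ιD : HD ⥤ D) [ιD.Full] [ιD.Faithful]
    (hHD : ∀ X : HD, tD.le 0 (ιD.obj X) ∧ tD.ge 0 (ιD.obj X))
    (hHD' : ∀ Y : D, tD.le 0 Y → tD.ge 0 Y → ∃ X : HD, Nonempty (ιD.obj X ≅ Y))
    -- φ: an exact (triangulated) fully faithful t-exact functor
    (φ : C ⥤ D) [φ.CommShift ℤ] [φ.IsTriangulated] [φ.Full] [φ.Faithful]
    (hφle : ∀ X : C, tC.le 0 X → tD.le 0 (φ.obj X))
    (hφge : ∀ X : C, tC.ge 0 X → tD.ge 0 (φ.obj X))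
    -- every object of the heart of `D` has finite length
    (hlenD : ∀ X : HD, CategoryTheory.IsFiniteLength X)
    -- every simple object of the heart of `D` comes from the heart of `C`
    (hsimp : ∀ M : HD, Simple M → ∃ X : HC, Nonempty (ιD.obj M ≅ φ.obj (ιC.obj X))) :
    φ.IsEquivalence ∧
      ∃ ψ : HC ⥤ HD, ψ.IsEquivalence ∧ Nonempty (ιC ⋙ φ ≅ ψ ⋙ ιD) := by

  classical
  -- the essential image of `φ` is closed under "cones"
  have Pcone : ∀ T : Pretriangulated.Triangle D, (T ∈ distTriang D) →
      (∃ X : C, Nonempty (φ.obj X ≅ T.obj₁)) → (∃ X : C, Nonempty (φ.obj X ≅ T.obj₃)) →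
      ∃ X : C, Nonempty (φ.obj X ≅ T.obj₂) := by
    rintro T hT ⟨X, ⟨eX⟩⟩ ⟨Z, ⟨eZ⟩⟩
    have hrot : T.rotate.rotate ∈ distTriang D := rot_of_distTriang _ (rot_of_distTriang _ hT)
    set g : Z ⟶ X⟦(1:ℤ)⟧ := φ.preimage
      (eZ.hom ≫ T.mor₃ ≫ (shiftFunctor D (1:ℤ)).map eX.inv ≫ (φ.commShiftIso (1:ℤ)).inv.app X)
      with hgdef
    obtain ⟨W, v', w', hW⟩ := Pretriangulated.distinguished_cocone_triangle g
    have hmap := φ.map_distinguished _ hW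
    have comm : (φ.mapTriangle.obj (Pretriangulated.Triangle.mk g v' w')).mor₁ ≫
        ((φ.commShiftIso (1:ℤ)).app X ≪≫ (shiftFunctor D (1:ℤ)).mapIso eX).hom
        = eZ.hom ≫ T.rotate.rotate.mor₁ := by
      dsimp
      change φ.map g ≫ _ = _
      rw [hgdef, φ.map_preimage]
      simp only [Category.assoc, Iso.inv_hom_id_app_assoc, ← Functor.map_comp,
        Iso.inv_hom_id, CategoryTheory.Functor.map_id, Category.comp_id]
      rfl
    have eT := Pretriangulated.isoTriangleOfIso₁₂ _ _ hmap hrot eZ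
      ((φ.commShiftIso (1:ℤ)).app X ≪≫ (shiftFunctor D (1:ℤ)).mapIso eX) comm
    have e₃ : φ.obj W ≅ (T.obj₂)⟦(1:ℤ)⟧ := Pretriangulated.Triangle.π₃.mapIso eT
    exact ⟨W⟦(-1:ℤ)⟧, ⟨(φ.commShiftIso (-1:ℤ)).app W ≪≫ (shiftFunctor D (-1:ℤ)).mapIso e₃
      ≪≫ (shiftFunctorCompIsoId D (1:ℤ) (-1:ℤ) (by omega)).app T.obj₂⟩⟩
  -- heart of `D` lies in the essential image of `φ`
  have heartP : ∀ M : HD, ∃ X : C, Nonempty (φ.obj X ≅ ιD.obj M) := by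
    intro M
    induction hlenD M with
    | of_isZero X hX =>
      obtain ⟨O, hO⟩ := HasZeroObject.zero (C := C)
      have h1 : IsZero (φ.obj O) := by
        rw [IsZero.iff_id_eq_zero, ← φ.map_id, hO.eq_of_src (𝟙 O) 0, Functor.map_zero]
      exact ⟨O, ⟨h1.iso (Statement4Aux.ffIsZero ιD hX)⟩⟩
    | of_shortExact S hS h₁ h₃ ih =>
      obtain ⟨Z, v, w, hZw⟩ := Pretriangulated.distinguished_cocone_triangle (ιD.map S.f)
      have hmono : ∀ N : D, tD.le 0 N → tD.ge 0 N →
          ∀ ψ : N ⟶ ιD.obj S.X₁, ψ ≫ ιD.map S.f = 0 → ψ = 0 := by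
        intro N hN1 hN2 ψ hψ
        obtain ⟨N₀, ⟨e⟩⟩ := hHD' N hN1 hN2
        have hψ₀ : ιD.preimage (e.hom ≫ ψ) ≫ S.f = 0 := by
          rw [← Statement4Aux.ffMapEqZero_iff ιD, Functor.map_comp, ιD.map_preimage,
            Category.assoc, hψ, comp_zero]
        have hmf := hS.mono_f
        have h1 : ιD.preimage (e.hom ≫ ψ) = 0 := zero_of_comp_mono S.f hψ₀
        have h2 : e.hom ≫ ψ = 0 := by
          rw [← ιD.map_preimage (e.hom ≫ ψ), h1, Statement4Aux.ffMapZero]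
        rw [← Category.id_comp ψ, ← e.inv_hom_id, Category.assoc, h2, comp_zero]
      obtain ⟨hZ1, hZ2, hex, huniq⟩ := Statement4Aux.cone_heart tD hZw
        (hHD S.X₁).1 (hHD S.X₁).2 (hHD S.X₂).1 (hHD S.X₂).2 hmono
      have hug : ιD.map S.f ≫ ιD.map S.g = 0 := by
        rw [← Functor.map_comp, S.zero, Statement4Aux.ffMapZero]
      obtain ⟨c, hc⟩ := hex (ιD.obj S.X₃) (ιD.map S.g) hug
      obtain ⟨Z₀, ⟨eZ0⟩⟩ := hHD' Z hZ1 hZ2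
      have h0 : ιD.map S.f ≫ v = 0 := Pretriangulated.comp_distTriang_mor_zero₁₂ _ hZw
      have hv₀ : S.f ≫ ιD.preimage (v ≫ eZ0.inv) = 0 := by
        rw [← Statement4Aux.ffMapEqZero_iff ιD, Functor.map_comp, ιD.map_preimage,
          ← Category.assoc, h0, zero_comp]
      obtain ⟨d₀, hd₀⟩ :=
        CokernelCofork.IsColimit.desc' hS.gIsCokernel (ιD.preimage (v ≫ eZ0.inv)) hv₀
      have hd₀' : S.g ≫ d₀ = ιD.preimage (v ≫ eZ0.inv) := hd₀
      set d : ιD.obj S.X₃ ⟶ Z := ιD.map d₀ ≫ eZ0.hom with hd_def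
      have hd : ιD.map S.g ≫ d = v := by
        rw [hd_def, ← Category.assoc, ← Functor.map_comp, hd₀', ιD.map_preimage,
          Category.assoc, Iso.inv_hom_id, Category.comp_id]
      have hcd : c ≫ d = 𝟙 Z := by
        apply huniq _ _ _ hZ2
        rw [Category.comp_id, ← Category.assoc, hc, hd]
      have hdc : d ≫ c = 𝟙 (ιD.obj S.X₃) := by
        have hepi := hS.epi_g
        have hk : S.g ≫ ιD.preimage (d ≫ c) = S.g ≫ 𝟙 S.X₃ := by
          apply ιD.map_injective
          rw [Functor.map_comp, ιD.map_preimage, Functor.map_comp, ← Category.assoc, hd,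
            hc, CategoryTheory.Functor.map_id, Category.comp_id]
        have hpre : ιD.preimage (d ≫ c) = 𝟙 S.X₃ := by
          rwa [cancel_epi S.g] at hk
        rw [← ιD.map_preimage (d ≫ c), hpre, CategoryTheory.Functor.map_id]
      obtain ⟨Xs, ⟨es⟩⟩ := hsimp S.X₃ h₃
      exact Pcone (Pretriangulated.Triangle.mk (ιD.map S.f) v w) hZw ih
        ⟨ιC.obj Xs, ⟨(es.symm ≪≫ Iso.mk d c hdc hcd).symm.symm⟩⟩
  -- shifted heart objects are in the essential image
  have heartP' : ∀ (Y : D) (b : ℤ), tD.le b Y → tD.ge b Y →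
      ∃ X : C, Nonempty (φ.obj X ≅ Y) := by
    intro Y b h1 h2
    obtain ⟨M, ⟨e⟩⟩ := hHD' (Y⟦b⟧) (tD.le_shift b b 0 (by omega) Y h1)
      (tD.ge_shift b b 0 (by omega) Y h2)
    obtain ⟨X, ⟨e'⟩⟩ := heartP M
    exact ⟨X⟦(-b:ℤ)⟧, ⟨(φ.commShiftIso (-b)).app X ≪≫ (shiftFunctor D (-b)).mapIso (e' ≪≫ e)
      ≪≫ (shiftFunctorCompIsoId D b (-b) (by omega)).app Y⟩⟩
  -- essential surjectivity by dévissage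
  have main : ∀ (k : ℕ) (Y : D) (a b : ℤ), tD.ge a Y → tD.le b Y → b ≤ a + k →
      ∃ X : C, Nonempty (φ.obj X ≅ Y) := by
    intro k
    induction k with
    | zero =>
      intro Y a b hg hl hba
      exact heartP' Y b hl (tD.ge_antitone (by omega : b ≤ a) _ hg)
    | succ k ih =>
      intro Y a b hg hl hba
      by_cases hcase : b ≤ a
      · exact heartP' Y b hl (tD.ge_antitone hcase _ hg)
      · obtain ⟨A, B, hA, hB, f, g, w, dist⟩ := tD.exists_triangle Y a (a+1) rfl
        have hA' : tD.ge a A := Statement4Aux.ge_ext₂ tD _ (inv_rot_of_distTriang _ dist) a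
          (tD.ge_antitone (by omega : a ≤ a + 2) _
            (tD.ge_shift (a+1) (-1) (a+2) (by omega) B hB)) hg
        have PA := heartP' A a hA hA'
        have hB' : tD.le b B := Statement4Aux.le_ext₂ tD _ (rot_of_distTriang _ dist) b hl
          (tD.le_monotone (by omega : a - 1 ≤ b) _ (tD.le_shift a 1 (a-1) (by omega) A hA))
        have PB := ih B (a+1) b hB hB' (by omega)
        exact Pcone (Pretriangulated.Triangle.mk f g w) dist PA PB
  have essSurj : ∀ Y : D, ∃ X : C, Nonempty (φ.obj X ≅ Y) := by
    intro Y
    obtain ⟨a, b, hg, hl⟩ := hbD Y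
    exact main (b - a).toNat Y a b hg hl (by omega)
  -- φ reflects the t-structure
  have reflLE : ∀ Y : C, tD.le 0 (φ.obj Y) → tC.le 0 Y := by
    intro Y hY
    apply Statement4Aux.le_orth tC 0
    intro W hW f
    have h2 : tD.ge 0 ((φ.obj W)⟦(1:ℤ)⟧) :=
      (ObjectProperty.prop_iff_of_iso (tD.ge 0) ((φ.commShiftIso (1:ℤ)).app W)).1
        (hφge _ (tC.ge_shift (0+1) 1 0 (by omega) W hW))
    have h3 : tD.ge 1 (φ.obj W) := by
      have h4 : tD.ge 1 (((φ.obj W)⟦(1:ℤ)⟧)⟦(-1:ℤ)⟧) :=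
        tD.ge_shift 0 (-1) 1 (by omega) _ h2
      exact (ObjectProperty.prop_iff_of_iso (tD.ge 1)
        ((shiftFunctorCompIsoId D (1:ℤ) (-1:ℤ) (by omega)).app (φ.obj W))).1 h4
    have h5 : φ.map f = 0 := Statement4Aux.tzero tD (φ.map f) 0 1 (by omega) hY h3
    apply φ.map_injective
    rw [h5, Functor.map_zero]
  have reflGE : ∀ Y : C, tD.ge 0 (φ.obj Y) → tC.ge 0 Y := by
    intro Y hY
    apply Statement4Aux.ge_orth tC 0
    intro W hW f
    have h2 : tD.le 0 ((φ.obj W)⟦(-1:ℤ)⟧) :=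
      (ObjectProperty.prop_iff_of_iso (tD.le 0) ((φ.commShiftIso (-1:ℤ)).app W)).1
        (hφle _ (tC.le_shift (0-1) (-1) 0 (by omega) W hW))
    have h3 : tD.le (-1) (φ.obj W) := by
      have h4 := tD.le_shift 0 1 (-1) (by omega) _ h2
      exact (ObjectProperty.prop_iff_of_iso (tD.le (-1))
        ((shiftFunctorCompIsoId D (-1:ℤ) (1:ℤ) (by omega)).app (φ.obj W))).1 h4
    have h5 : φ.map f = 0 := Statement4Aux.tzero tD (φ.map f) (-1) 0 (by omega) h3 hY
    apply φ.map_injective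
    rw [h5, Functor.map_zero]
  -- construction of ψ
  have hOb : ∀ X : HC, ∃ M : HD, Nonempty (ιD.obj M ≅ φ.obj (ιC.obj X)) :=
    fun X => hHD' _ (hφle _ (hHC X).1) (hφge _ (hHC X).2)
  choose ob eOb using hOb
  let eI : ∀ X : HC, ιD.obj (ob X) ≅ φ.obj (ιC.obj X) := fun X => (eOb X).some
  let ψ : HC ⥤ HD :=
    { obj := ob
      map := fun {X X'} f => ιD.preimage ((eI X).hom ≫ φ.map (ιC.map f) ≫ (eI X').inv)
      map_id := fun X => by
        apply ιD.map_injective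
        simp
      map_comp := fun {X X' X''} f g => by
        apply ιD.map_injective
        simp }
  have hψmap : ∀ {X X' : HC} (f : X ⟶ X'),
      ιD.map (ψ.map f) = (eI X).hom ≫ φ.map (ιC.map f) ≫ (eI X').inv :=
    fun f => ιD.map_preimage _
  haveI hψfaith : ψ.Faithful := by
    refine ⟨fun {X X'} {f g} h => ?_⟩
    apply ιC.map_injective; apply φ.map_injective
    have h2 : ιD.map (ψ.map f) = ιD.map (ψ.map g) := by rw [h]
    rw [hψmap, hψmap, Iso.cancel_iso_hom_left] at h2
    exact (cancel_mono (eI X').inv).1 h2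
  haveI hψfull : ψ.Full := by
    refine ⟨fun {X X'} h => ?_⟩
    refine ⟨ιC.preimage (φ.preimage ((eI X).inv ≫ ιD.map h ≫ (eI X').hom)), ?_⟩
    apply ιD.map_injective
    rw [hψmap, Functor.map_preimage, Functor.map_preimage]
    simp
  haveI hψess : ψ.EssSurj := by
    refine ⟨fun M => ?_⟩
    obtain ⟨Yc, ⟨ey⟩⟩ := essSurj (ιD.obj M)
    have hY1 : tD.le 0 (φ.obj Yc) := (ObjectProperty.prop_iff_of_iso (tD.le 0) ey).2 (hHD M).1
    have hY2 : tD.ge 0 (φ.obj Yc) := (ObjectProperty.prop_iff_of_iso (tD.ge 0) ey).2 (hHD M).2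
    obtain ⟨Xc, ⟨ex⟩⟩ := hHC' Yc (reflLE Yc hY1) (reflGE Yc hY2)
    exact ⟨Xc, ⟨ιD.preimageIso (eI Xc ≪≫ φ.mapIso ex ≪≫ ey)⟩⟩
  haveI hφess : φ.EssSurj := ⟨fun Y => essSurj Y⟩
  refine ⟨{}, ψ, {}, ⟨?_⟩⟩
  exact NatIso.ofComponents (fun X => (eI X).symm) (fun {X X'} f => by
    dsimp
    rw [hψmap]
    simp)
end

section
/- Let R be a commutative local ring and let P and Q be finitely generated projective R-modules such that the endomorphism rings End_R(P) and End_R(Q) are isomorphic as R-algebras. Then P and Q are isomorphic as R-modules. In particular, if the matrix algebras M_m(R) and M_n(R) are isomorphic as R-algebras, then m = n. -/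
/-- Over a commutative local ring, two finitely generated projective modules with isomorphic
endomorphism algebras are isomorphic; in particular `M_m(R) ≃ₐ[R] M_n(R)` forces `m = n`. -/
theorem statement5 {R : Type*} [CommRing R] [IsLocalRing R]
    (P Q : Type*) [AddCommGroup P] [Module R P] [AddCommGroup Q] [Module R Q]
    [Module.Finite R P] [Module.Projective R P] [Module.Finite R Q] [Module.Projective R Q]
    (e : Module.End R P ≃ₐ[R] Module.End R Q) :
    Nonempty (P ≃ₗ[R] Q) ∧
      ∀ m n : ℕ, Nonempty (Matrix (Fin m) (Fin m) R ≃ₐ[R] Matrix (Fin n) (Fin n) R) → m = n := by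
  constructor
  · have : Module.FinitePresentation R P := Module.finitePresentation_of_projective R P
    have : Module.FinitePresentation R Q := Module.finitePresentation_of_projective R Q
    have hP : Module.Free R P := Module.free_of_flat_of_isLocalRing
    have hQ : Module.Free R Q := Module.free_of_flat_of_isLocalRing
    have h2 : Module.finrank R P * Module.finrank R P
        = Module.finrank R Q * Module.finrank R Q := by
      have := e.toLinearEquiv.finrank_eq
      simpa [Module.finrank_linearMap] using this
    have h : Module.finrank R P = Module.finrank R Q := Nat.mul_self_inj.mp h2
    exact ⟨(Module.Free.chooseBasis R P).equiv (Module.Free.chooseBasis R Q)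
      (Fintype.equivOfCardEq (by
        rw [← Module.finrank_eq_card_chooseBasisIndex, ← Module.finrank_eq_card_chooseBasisIndex, h]))⟩
  · rintro m n ⟨f⟩
    have := f.toLinearEquiv.finrank_eq
    rw [Module.finrank_matrix, Module.finrank_matrix] at this
    simpa using Nat.mul_self_inj.mp (by simpa using this)
end
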